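/- Let μ₁(x,y) = (3/4)(x² - 2x²y² + y²) on [-1,1]². Then ∫_{[-1,1]²} μ₁ = 4/3, and for every line ℓ the integral of μ₁ over ℓ ∩ [-1,1]² with respect to the measure d(|x|+|y|) is at most 1. -/

import Mathlib

set_option maxHeartbeats 1000000

noncomputable def mu1 (p : ℝ × ℝ) : ℝ := 3 / 4 * (p.1 ^ 2 - 2 * p.1 ^ 2 * p.2 ^ 2 + p.2 ^ 2)

open MeasureTheory Set

/-- Generic integral of a quartic polynomial over `Icc u v`. -/
lemma ip5 (u v A B C D E : ℝ) (h : u ≤ v) (f : ℝ → ℝ)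
    (hf : ∀ x, f x = 5*A*x^4 + 4*B*x^3 + 3*C*x^2 + 2*D*x + E) :
    ∫ x in Set.Icc u v, f x
      = (A*v^5+B*v^4+C*v^3+D*v^2+E*v) - (A*u^5+B*u^4+C*u^3+D*u^2+E*u) := by
  have hcont : Continuous f := by
    have hfe : f = fun x => 5*A*x^4 + 4*B*x^3 + 3*C*x^2 + 2*D*x + E := funext hf
    rw [hfe]; fun_prop
  rw [MeasureTheory.integral_Icc_eq_integral_Ioc, ← intervalIntegral.integral_of_le h]
  have hd : ∀ x ∈ Set.uIcc u v,
      HasDerivAt (fun x => A*x^5+B*x^4+C*x^3+D*x^2+E*x) (f x) x := by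
    intro x _
    have H := (((((hasDerivAt_pow 5 x).const_mul A).add
      ((hasDerivAt_pow 4 x).const_mul B)).add
      ((hasDerivAt_pow 3 x).const_mul C)).add
      ((hasDerivAt_pow 2 x).const_mul D)).add ((hasDerivAt_id x).const_mul E)
    refine H.congr_deriv ?_
    rw [hf x]
    push_cast
    ring
  rw [intervalIntegral.integral_eq_sub_of_hasDerivAt hd (hcont.intervalIntegrable u v)]

/-- Reflection of a set integral. -/
lemma neg_trick (f : ℝ → ℝ) (s : Set ℝ) :
    ∫ x in (fun x : ℝ => -x) ⁻¹' s, f (-x) = ∫ x in s, f x := by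
  have A : MeasurableEmbedding fun x : ℝ => -x :=
    (Homeomorph.neg ℝ).measurableEmbedding
  have h := A.setIntegral_map (μ := volume) f s
  rw [Measure.map_neg_eq_self (volume : Measure ℝ)] at h
  exact h.symm

/-- Case A polynomial bound. -/
lemma caseA (a b : ℝ) (ha : 0 ≤ a) (h1 : a - 1 ≤ b) (h2 : b ≤ 1 - a) :
    (1 + a) * (1/2 - a^2/10 + b^2/2) ≤ 1 := by
  nlinarith [mul_nonneg (by linarith : (0:ℝ) ≤ 1 + a)
      (sub_nonneg.mpr (by nlinarith : b^2 ≤ (1-a)^2)),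
    mul_nonneg (mul_nonneg ha ha) (by linarith : (0:ℝ) ≤ 1 - a), sq_nonneg a]

/-- Case D polynomial bound. -/
lemma caseD (a b : ℝ) (ha : 0 < a) (h1 : 1 - a ≤ b) (h2 : b ≤ a - 1) :
    (1 + a) * (a^2/2 + b^2/2 - 1/10) ≤ a^3 := by
  nlinarith [mul_nonneg (by linarith : (0:ℝ) ≤ 1 + a)
      (sub_nonneg.mpr (by nlinarith : b^2 ≤ (a-1)^2)),
    mul_nonneg ha.le (sq_nonneg (a-1)), sq_nonneg (a-1)]

/-- Case B/C polynomial bound. -/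
lemma caseB (a v : ℝ) (ha : 0 ≤ a) (h1 : -1 ≤ v) (h2 : v ≤ 1) (h3 : a * (1 + v) ≤ 2) :
    (1 + a) * (1/2 + 3/4*v - 1/4*v^3 - 1/2*a*v - 3/4*a*v^2 + 1/4*a*v^4
      - 1/20*a^2 + 1/4*a^2*v^2 + 1/4*a^2*v^3 - 1/20*a^2*v^5) ≤ 1 := by
  have hp0 : (0:ℝ) ≤ (1+a)*(1+v) := mul_nonneg (by linarith) (by linarith)
  have hp4 : (1+a)*(1+v) ≤ 4 := by nlinarith
  have hN1 : (0:ℝ) ≤ ((1+a)*(1+v)) * (2*(a*(1+v)^2) + 10 - 5*((1+a)*(1+v)))^2 :=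
    mul_nonneg hp0 (sq_nonneg _)
  have hN2 : (0:ℝ) ≤ 5*((1+a)*(1+v)-2)^2*(4-(1+a)*(1+v)) :=
    mul_nonneg (mul_nonneg (by norm_num) (sq_nonneg _)) (by linarith)
  nlinarith [hN1, hN2]

/-- Key line-bound for nonnegative slope. -/
lemma key (a b : ℝ) (ha : 0 ≤ a) :
    ∫ x in {x : ℝ | x ∈ Set.Icc (-1 : ℝ) 1 ∧ a * x + b ∈ Set.Icc (-1 : ℝ) 1},
        (1 + |a|) * mu1 (x, a * x + b) ≤ 1 := by
  simp only [abs_of_nonneg ha]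
  have hfa : ∀ x : ℝ, (1 + a) * mu1 (x, a*x+b)
      = 5*(-(3/10)*(1+a)*a^2)*x^4 + 4*(-(3/4)*(1+a)*a*b)*x^3
        + 3*((1/4)*(1+a)*(1+a^2-2*b^2))*x^2 + 2*((3/4)*(1+a)*a*b)*x
        + ((3/4)*(1+a)*b^2) := by
    intro x; simp only [mu1]; ring
  rcases eq_or_lt_of_le ha with ha0 | ha0
  · -- a = 0
    subst ha0
    by_cases hb : b ∈ Set.Icc (-1 : ℝ) 1
    · have hS : {x : ℝ | x ∈ Set.Icc (-1:ℝ) 1 ∧ (0:ℝ) * x + b ∈ Set.Icc (-1:ℝ) 1}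
          = Set.Icc (-1:ℝ) 1 := by
        ext x
        simp only [Set.mem_setOf_eq, zero_mul, zero_add, and_iff_left hb]
      rw [hS]
      rw [ip5 (-1) 1 (-(3/10)*(1+0)*0^2) (-(3/4)*(1+0)*0*b) ((1/4)*(1+0)*(1+0^2-2*b^2))
        ((3/4)*(1+0)*0*b) ((3/4)*(1+0)*b^2) (by norm_num) _ hfa]
      obtain ⟨hb1, hb2⟩ := hb
      nlinarith [sq_nonneg b]
    · have hS : {x : ℝ | x ∈ Set.Icc (-1:ℝ) 1 ∧ (0:ℝ) * x + b ∈ Set.Icc (-1:ℝ) 1}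
          = (∅ : Set ℝ) := by
        ext x
        simp only [Set.mem_setOf_eq, zero_mul, zero_add, Set.mem_empty_iff_false, iff_false]
        tauto
      rw [hS]
      simp
  · -- a > 0
    have hS : {x : ℝ | x ∈ Set.Icc (-1:ℝ) 1 ∧ a * x + b ∈ Set.Icc (-1:ℝ) 1}
        = Set.Icc (max (-1) ((-1-b)/a)) (min 1 ((1-b)/a)) := by
      ext x
      simp only [Set.mem_setOf_eq, Set.mem_Icc, max_le_iff, le_min_iff]
      constructor
      · rintro ⟨⟨hx1, hx2⟩, hy1, hy2⟩
        refine ⟨⟨hx1, ?_⟩, hx2, ?_⟩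
        · rw [div_le_iff₀ ha0]; linarith
        · rw [le_div_iff₀ ha0]; linarith
      · rintro ⟨⟨hx1, hx2⟩, hx3, hx4⟩
        rw [div_le_iff₀ ha0] at hx2
        rw [le_div_iff₀ ha0] at hx4
        exact ⟨⟨hx1, hx3⟩, by linarith, by linarith⟩
    rw [hS]
    rcases le_total ((-1-b)/a) (-1) with h1 | h1 <;> rcases le_total 1 ((1-b)/a) with h2 | h2
    · -- Case A : full interval
      rw [max_eq_left h1, min_eq_left h2]
      rw [ip5 (-1) 1 _ _ _ _ _ (by norm_num) _ hfa]
      have hb1 : a - 1 ≤ b := by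
        rw [div_le_iff₀ ha0] at h1; linarith
      have hb2 : b ≤ 1 - a := by
        rw [le_div_iff₀ ha0] at h2; linarith
      have := caseA a b ha hb1 hb2
      nlinarith [this]
    · -- Case B : u = -1, v = (1-b)/a
      rw [max_eq_left h1, min_eq_right h2]
      rcases le_or_gt (-1 : ℝ) ((1-b)/a) with h3 | h3
      · obtain ⟨v0, hv0⟩ : ∃ t : ℝ, (1-b)/a = t := ⟨_, rfl⟩
        rw [hv0] at h2 h3 ⊢
        have ham : a * v0 = 1 - b := by
          rw [← hv0, mul_div_cancel₀ _ (ne_of_gt ha0)]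
        have hb : b = 1 - a * v0 := by linarith
        have hb1 : a - 1 ≤ b := by
          rw [div_le_iff₀ ha0] at h1; linarith
        have hcon : a * (1 + v0) ≤ 2 := by nlinarith
        rw [ip5 (-1) v0 _ _ _ _ _ (by linarith) _ hfa, hb]
        have := caseB a v0 ha h3 h2 hcon
        nlinarith [this]
      · rw [Set.Icc_eq_empty (by exact fun h => absurd h (not_le.mpr h3))]
        simp
    · -- Case C : u = (-1-b)/a, v = 1
      rw [max_eq_right h1, min_eq_left h2]
      rcases le_or_gt ((-1-b)/a) 1 with h3 | h3
      · obtain ⟨u0, hu0⟩ : ∃ t : ℝ, (-1-b)/a = t := ⟨_, rfl⟩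
        rw [hu0] at h1 h3 ⊢
        have ham : a * u0 = -1 - b := by
          rw [← hu0, mul_div_cancel₀ _ (ne_of_gt ha0)]
        have hb : b = -1 - a * u0 := by linarith
        have hb2 : b ≤ 1 - a := by
          rw [le_div_iff₀ ha0] at h2; linarith
        have hcon : a * (1 + -u0) ≤ 2 := by nlinarith
        have hu1 : -1 ≤ -u0 := by linarith
        have hu2 : -u0 ≤ 1 := by linarith
        rw [ip5 u0 1 _ _ _ _ _ h3 _ hfa, hb]
        have := caseB a (-u0) ha hu1 hu2 hcon
        nlinarith [this]
      · rw [Set.Icc_eq_empty (by exact fun h => absurd h (not_le.mpr h3))]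
        simp
    · -- Case D : both interior
      rw [max_eq_right h1, min_eq_right h2]
      have huv : (-1-b)/a ≤ (1-b)/a :=
        (div_le_div_iff_of_pos_right ha0).mpr (by linarith)
      have hb1 : b ≤ a - 1 := by
        rw [le_div_iff₀ ha0] at h1; linarith
      have hb2 : 1 - a ≤ b := by
        rw [div_le_iff₀ ha0] at h2; linarith
      rw [ip5 ((-1-b)/a) ((1-b)/a) _ _ _ _ _ huv _ hfa]
      have hval : (-(3/10)*(1+a)*a^2)*((1-b)/a)^5 + (-(3/4)*(1+a)*a*b)*((1-b)/a)^4
            + ((1/4)*(1+a)*(1+a^2-2*b^2))*((1-b)/a)^3 + ((3/4)*(1+a)*a*b)*((1-b)/a)^2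
            + ((3/4)*(1+a)*b^2)*((1-b)/a)
          - ((-(3/10)*(1+a)*a^2)*((-1-b)/a)^5 + (-(3/4)*(1+a)*a*b)*((-1-b)/a)^4
            + ((1/4)*(1+a)*(1+a^2-2*b^2))*((-1-b)/a)^3 + ((3/4)*(1+a)*a*b)*((-1-b)/a)^2
            + ((3/4)*(1+a)*b^2)*((-1-b)/a))
          = (1+a)*(a^2/2 + b^2/2 - 1/10)/a^3 := by
        field_simp
        ring
      rw [hval, div_le_one (by positivity)]
      exact caseD a b ha0 hb2 hb1

/-- `∫ μ₁ = 4/3` and every line integral of `μ₁` w.r.t. `d(|x|+|y|)` is at most 1. -/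
theorem mu1_density_feasible :
    (∫ p in (Set.Icc (-1 : ℝ) 1 ×ˢ Set.Icc (-1 : ℝ) 1), mu1 p = 4 / 3) ∧
    (∀ a b : ℝ,
      ∫ x in {x : ℝ | x ∈ Set.Icc (-1 : ℝ) 1 ∧ a * x + b ∈ Set.Icc (-1 : ℝ) 1},
        (1 + |a|) * mu1 (x, a * x + b) ≤ 1) ∧
    (∀ c ∈ Set.Icc (-1 : ℝ) 1, ∫ y in Set.Icc (-1 : ℝ) 1, mu1 (c, y) ≤ 1) := by
  have hcont : Continuous mu1 := by
    unfold mu1; fun_prop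
  refine ⟨?_, ?_, ?_⟩
  · -- total mass
    rw [MeasureTheory.Measure.volume_eq_prod]
    rw [MeasureTheory.setIntegral_prod _
      ((hcont.continuousOn).integrableOn_compact (isCompact_Icc.prod isCompact_Icc))]
    have hin : ∀ x : ℝ, ∫ y in Set.Icc (-1:ℝ) 1, mu1 (x, y) = 1/2 + x^2/2 := by
      intro x
      rw [ip5 (-1) 1 0 0 ((1/4)*(1-2*x^2)) 0 ((3/4)*x^2) (by norm_num) _
        (fun y => by simp only [mu1]; ring)]
      ring
    simp_rw [hin]
    rw [ip5 (-1) 1 0 0 (1/6) 0 (1/2) (by norm_num) _ (fun x => by ring)]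
    norm_num
  · -- line integrals
    intro a b
    rcases le_total 0 a with ha | ha
    · exact key a b ha
    · have h0 : (0:ℝ) ≤ -a := by linarith
      have hk := key (-a) b h0
      have hset : {x : ℝ | x ∈ Set.Icc (-1:ℝ) 1 ∧ a * x + b ∈ Set.Icc (-1:ℝ) 1}
          = (fun x : ℝ => -x) ⁻¹'
            {x : ℝ | x ∈ Set.Icc (-1:ℝ) 1 ∧ -a * x + b ∈ Set.Icc (-1:ℝ) 1} := by
        ext x
        simp only [Set.mem_setOf_eq, Set.mem_preimage, Set.mem_Icc]
        constructor
        · rintro ⟨⟨p, q⟩, r, s⟩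
          have e : -a * -x = a * x := by ring
          exact ⟨⟨by linarith, by linarith⟩, by rw [e]; exact r, by rw [e]; exact s⟩
        · rintro ⟨⟨p, q⟩, r, s⟩
          have e : -a * -x = a * x := by ring
          rw [e] at r s
          exact ⟨⟨by linarith, by linarith⟩, r, s⟩
      have hfun : (fun x : ℝ => (1 + |a|) * mu1 (x, a * x + b))
          = fun x : ℝ => (1 + |(-a)|) * mu1 (-x, -a * (-x) + b) := by
        funext x
        rw [abs_neg]
        simp only [mu1]
        ring
      calc ∫ x in {x : ℝ | x ∈ Set.Icc (-1:ℝ) 1 ∧ a * x + b ∈ Set.Icc (-1:ℝ) 1},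
              (1 + |a|) * mu1 (x, a * x + b)
          = ∫ x in (fun x : ℝ => -x) ⁻¹'
              {x : ℝ | x ∈ Set.Icc (-1:ℝ) 1 ∧ -a * x + b ∈ Set.Icc (-1:ℝ) 1},
              (1 + |(-a)|) * mu1 (-x, -a * (-x) + b) := by rw [hset, hfun]
        _ = ∫ x in {x : ℝ | x ∈ Set.Icc (-1:ℝ) 1 ∧ -a * x + b ∈ Set.Icc (-1:ℝ) 1},
              (1 + |(-a)|) * mu1 (x, -a * x + b) :=
            neg_trick (fun y => (1 + |(-a)|) * mu1 (y, -a * y + b)) _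
        _ ≤ 1 := hk
  · -- vertical lines
    intro c hc
    rw [ip5 (-1) 1 0 0 ((1/4)*(1-2*c^2)) 0 ((3/4)*c^2) (by norm_num) _
      (fun y => by simp only [mu1]; ring)]
    obtain ⟨hc1, hc2⟩ := hc
    nlinarith [sq_nonneg c]
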